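/- Let k ≥ 3 and let W ∈ 𝒲*. Then there exists i ∈ W̄ with p^i ≡ 1 (mod 3). -/

import Mathlib

/-- `Cseg n k i` is the set `C^i = {i, i+1, …, i+k−1} ⊆ ℤ_n`. -/
def Cseg (n k : ℕ) (i : ZMod n) : Finset (ZMod n) :=
  (Finset.range k).image fun h : ℕ => i + (h : ZMod n)

/-- A cover of the circulant matrix `C_n^k`. -/
def IsCover (n k : ℕ) (x : Finset (ZMod n)) : Prop :=
  ∀ i : ZMod n, (x ∩ Cseg n k i).Nonempty

/-- A minimal cover of `C_n^k`. -/
def IsMinimalCover (n k : ℕ) (x : Finset (ZMod n)) : Prop :=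
  IsCover n k x ∧ ∀ y : Finset (ZMod n), y ⊂ x → ¬ IsCover n k y

/-- The covering number `τ(C_n^k)`. -/
noncomputable def coveringNumber (n k : ℕ) : ℕ :=
  sInf {m : ℕ | ∃ x : Finset (ZMod n), IsCover n k x ∧ x.card = m}

/-- A minimum cover of `C_n^k`. -/
noncomputable def IsMinimumCover (n k : ℕ) (x : Finset (ZMod n)) : Prop :=
  IsCover n k x ∧ x.card = coveringNumber n k

/-- `xcov n k i` is the cover `x^i = {i + h·k : 0 ≤ h ≤ ⌈n/k⌉ − 1}`. -/
def xcov (n k : ℕ) (i : ZMod n) : Finset (ZMod n) :=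
  (Finset.range ((n + k - 1) / k)).image fun h : ℕ => i + ((h * k : ℕ) : ZMod n)

/-- The cyclic closed interval `[a,b]_n` of `ℤ_n`. -/
def cycInterval (n : ℕ) (a b : ZMod n) : Finset (ZMod n) :=
  (Finset.range ((b - a).val + 1)).image fun h : ℕ => a + (h : ZMod n)

/-- The inequality `a·x ≥ α` is valid for `Q(C_n^k)`. -/
def IsValid (n k : ℕ) (a : ZMod n → ℤ) (α : ℤ) : Prop :=
  ∀ x : Finset (ZMod n), IsCover n k x → α ≤ ∑ i ∈ x, a i

/-- A root of a valid inequality: a cover satisfying it with equality. -/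
def IsRoot (n k : ℕ) (a : ZMod n → ℤ) (α : ℤ) (x : Finset (ZMod n)) : Prop :=
  IsCover n k x ∧ ∑ i ∈ x, a i = α

/-- Characteristic vector of a subset of `ℤ_n`. -/
noncomputable def charVec (n : ℕ) (x : Finset (ZMod n)) : ZMod n → ℝ :=
  fun i => if i ∈ x then 1 else 0

/-- `a·x ≥ α` is facet defining for `Q(C_n^k)`: it is valid, and the characteristic
vectors of its roots affinely span an `(n−1)`-dimensional affine subspace of `ℝ^n`. -/
def IsFacet (n k : ℕ) (a : ZMod n → ℤ) (α : ℤ) : Prop :=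
  IsValid n k a α ∧
    Module.finrank ℝ
      (affineSpan ℝ
        {v : ZMod n → ℝ | ∃ x : Finset (ZMod n), IsRoot n k a α x ∧ v = charVec n x}).direction
      = n - 1

/-- `a·x ≥ α` is a positive multiple of one of the boolean inequalities
`x_i ≥ 0`, `−x_i ≥ −1`, `∑_{j ∈ C^i} x_j ≥ 1`. -/
def IsBooleanMultiple (n k : ℕ) (a : ZMod n → ℤ) (α : ℤ) : Prop :=
  ∃ c : ℤ, 0 < c ∧
    ( (∃ i : ZMod n, (∀ j, a j = if j = i then c else 0) ∧ α = 0)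
    ∨ (∃ i : ZMod n, (∀ j, a j = if j = i then -c else 0) ∧ α = -c)
    ∨ (∃ i : ZMod n, (∀ j, a j = if j ∈ Cseg n k i then c else 0) ∧ α = c) )

/-- `a·x ≥ α` is a positive multiple of the rank constraint `∑ x_i ≥ ⌈n/k⌉`. -/
def IsRankMultiple (n k : ℕ) (a : ZMod n → ℤ) (α : ℤ) : Prop :=
  ∃ c : ℤ, 0 < c ∧ (∀ j, a j = c) ∧ α = c * (((n + k - 1) / k : ℕ) : ℤ)

/-- The family `𝒲` of subsets `W ⊆ ℤ_{3k}` with `|x^i ∩ W| ≥ 1` and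
`|C^i ∩ W̄| ≥ 2` for every `i`. -/
def inFamilyW (k : ℕ) (W : Finset (ZMod (3 * k))) : Prop :=
  ∀ i : ZMod (3 * k), (xcov (3 * k) k i ∩ W).Nonempty ∧
    2 ≤ ((Cseg (3 * k) k i).filter (fun l => l ∉ W)).card

/-- `ω(i) = min {t ≥ 0 : i + k + t ∈ W̄}`. -/
noncomputable def omegaW (k : ℕ) (W : Finset (ZMod (3 * k))) (i : ZMod (3 * k)) : ℕ :=
  sInf {t : ℕ | i + ((k : ℕ) : ZMod (3 * k)) + (t : ZMod (3 * k)) ∉ W}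

/-- The sequence `r^i`: `r^i_0 = i`, `r^i_{t+1} = r^i_t + k + ω(r^i_t)`. -/
noncomputable def rseqW (k : ℕ) (W : Finset (ZMod (3 * k))) (i : ZMod (3 * k)) :
    ℕ → ZMod (3 * k)
  | 0 => i
  | t + 1 => rseqW k W i t + ((k : ℕ) : ZMod (3 * k))
      + ((omegaW k W (rseqW k W i t) : ℕ) : ZMod (3 * k))

/-- `p^i = max {t ≥ 0 : ∑_{j=0}^{t−1} ω(r^i_j) ≤ k−1}`. -/
noncomputable def pW (k : ℕ) (W : Finset (ZMod (3 * k))) (i : ZMod (3 * k)) : ℕ :=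
  sSup {t : ℕ | ∑ j ∈ Finset.range t, omegaW k W (rseqW k W i j) ≤ k - 1}

/-- The family `𝒲*`: those `W ∈ 𝒲` with `|x^i ∩ W| ≥ 2` for every `i` and
`[i+2k, i+2k+ω(i)]_{3k} ⊆ W` for every `i ∈ W̄`. -/
noncomputable def inFamilyWstar (k : ℕ) (W : Finset (ZMod (3 * k))) : Prop :=
  inFamilyW k W ∧
  (∀ i : ZMod (3 * k), 2 ≤ (xcov (3 * k) k i ∩ W).card) ∧
  (∀ i : ZMod (3 * k), i ∉ W →
    cycInterval (3 * k) (i + ((2 * k : ℕ) : ZMod (3 * k)))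
      (i + ((2 * k : ℕ) : ZMod (3 * k)) + ((omegaW k W i : ℕ) : ZMod (3 * k))) ⊆ W)

section Aux
variable {k : ℕ} {W : Finset (ZMod (3 * k))}

lemma exA (hW : inFamilyW k W) : ∃ x : ZMod (3 * k), x ∉ W := by
  obtain ⟨-, h2⟩ := hW 0
  have h : 0 < ((Cseg (3 * k) k 0).filter (fun l => l ∉ W)).card := by omega
  obtain ⟨l, hl⟩ := Finset.card_pos.mp h
  exact ⟨l, (Finset.mem_filter.mp hl).2⟩

lemma omega_set_nonempty (hk : 3 ≤ k) (hW : inFamilyW k W) (i : ZMod (3 * k)) :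
    {t : ℕ | i + ((k : ℕ) : ZMod (3 * k)) + (t : ZMod (3 * k)) ∉ W}.Nonempty := by
  haveI : NeZero (3 * k) := ⟨by omega⟩
  obtain ⟨x, hx⟩ := exA hW
  refine ⟨(x - (i + ((k : ℕ) : ZMod (3 * k)))).val, ?_⟩
  have h1 : (((x - (i + ((k : ℕ) : ZMod (3 * k)))).val : ℕ) : ZMod (3 * k))
      = x - (i + ((k : ℕ) : ZMod (3 * k))) := by simp [ZMod.natCast_val]
  simp only [Set.mem_setOf_eq, h1]
  have : i + ((k : ℕ) : ZMod (3 * k)) + (x - (i + ((k : ℕ) : ZMod (3 * k)))) = x := by ring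
  rwa [this]

lemma omega_spec (hk : 3 ≤ k) (hW : inFamilyW k W) (i : ZMod (3 * k)) :
    i + ((k : ℕ) : ZMod (3 * k)) + ((omegaW k W i : ℕ) : ZMod (3 * k)) ∉ W :=
  Nat.sInf_mem (omega_set_nonempty hk hW i)

lemma omega_min {i : ZMod (3 * k)} {t : ℕ} (ht : t < omegaW k W i) :
    i + ((k : ℕ) : ZMod (3 * k)) + (t : ZMod (3 * k)) ∈ W := by
  have := Nat.notMem_of_lt_sInf ht
  simpa using this

lemma omega_le (hk : 3 ≤ k) (hW : inFamilyW k W) (i : ZMod (3 * k)) :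
    omegaW k W i ≤ k - 2 := by
  by_contra hcon
  push_neg at hcon
  obtain ⟨-, h2⟩ := hW (i + ((k : ℕ) : ZMod (3 * k)))
  have hsub : (Cseg (3 * k) k (i + ((k : ℕ) : ZMod (3 * k)))).filter (fun l => l ∉ W)
      ⊆ {i + ((k : ℕ) : ZMod (3 * k)) + (((k - 1 : ℕ)) : ZMod (3 * k))} := by
    intro l hl
    obtain ⟨hC, hlW⟩ := Finset.mem_filter.mp hl
    obtain ⟨h, hh, rfl⟩ := Finset.mem_image.mp hC
    rw [Finset.mem_range] at hh
    rcases lt_or_ge h (k - 1) with h1 | h1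
    · exact absurd (omega_min (by omega)) hlW
    · have : h = k - 1 := by omega
      subst this
      exact Finset.mem_singleton_self _
  have := Finset.card_le_card hsub
  rw [Finset.card_singleton] at this
  omega

lemma interval_mem (hk : 3 ≤ k) (hW : inFamilyWstar k W) {i : ZMod (3 * k)} (hi : i ∉ W)
    {v : ℕ} (hv : v ≤ omegaW k W i) :
    i + ((2 * k : ℕ) : ZMod (3 * k)) + ((v : ℕ) : ZMod (3 * k)) ∈ W := by
  haveI : NeZero (3 * k) := ⟨by omega⟩
  apply hW.2.2 i hi
  unfold cycInterval
  apply Finset.mem_image.mpr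
  refine ⟨v, ?_, rfl⟩
  rw [Finset.mem_range]
  have h1 : (i + ((2 * k : ℕ) : ZMod (3 * k)) + ((omegaW k W i : ℕ) : ZMod (3 * k)))
      - (i + ((2 * k : ℕ) : ZMod (3 * k))) = ((omegaW k W i : ℕ) : ZMod (3 * k)) := by ring
  rw [h1, ZMod.val_natCast_of_lt (by have := omega_le hk hW.1 i; omega)]
  omega

lemma omega_pos (hk : 3 ≤ k) (hW : inFamilyWstar k W) {i : ZMod (3 * k)} (hi : i ∉ W) :
    1 ≤ omegaW k W (i + ((k : ℕ) : ZMod (3 * k)) + ((omegaW k W i : ℕ) : ZMod (3 * k))) := by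
  by_contra hcon
  have h0 : omegaW k W (i + ((k : ℕ) : ZMod (3 * k)) + ((omegaW k W i : ℕ) : ZMod (3 * k))) = 0 := by
    omega
  have hmem := omega_spec hk hW.1 (i + ((k : ℕ) : ZMod (3 * k)) + ((omegaW k W i : ℕ) : ZMod (3 * k)))
  rw [h0] at hmem
  apply hmem
  have he : i + ((k : ℕ) : ZMod (3 * k)) + ((omegaW k W i : ℕ) : ZMod (3 * k))
      + ((k : ℕ) : ZMod (3 * k)) + (((0 : ℕ)) : ZMod (3 * k))
      = i + ((2 * k : ℕ) : ZMod (3 * k)) + ((omegaW k W i : ℕ) : ZMod (3 * k)) := by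
    push_cast
    ring
  rw [he]
  exact interval_mem hk hW hi le_rfl

lemma period_mod {α : Type*} (f : ℕ → α) (L : ℕ) (hL : 1 ≤ L)
    (h : ∀ t, f (t + L) = f t) : ∀ t, f t = f (t % L) := by
  intro t
  induction t using Nat.strong_induction_on with
  | _ t ih =>
    rcases lt_or_ge t L with h1 | h1
    · rw [Nat.mod_eq_of_lt h1]
    · have h2 := h (t - L)
      rw [Nat.sub_add_cancel h1] at h2
      rw [h2, ih (t - L) (by omega), ← Nat.mod_eq_sub_mod h1]

end Aux

theorem stmt18 (k : ℕ) (hk : 3 ≤ k)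
    (W : Finset (ZMod (3 * k))) (hW : inFamilyWstar k W) :
    ∃ i : ZMod (3 * k), i ∉ W ∧ pW k W i % 3 = 1 := by
  haveI : NeZero (3 * k) := ⟨by omega⟩
  obtain ⟨x₀, hx₀⟩ := exA hW.1
  set r : ZMod (3 * k) → ZMod (3 * k) :=
    fun x => x + ((k : ℕ) : ZMod (3 * k)) + ((omegaW k W x : ℕ) : ZMod (3 * k)) with hr
  have rnotW : ∀ z, r z ∉ W := fun z => omega_spec hk hW.1 z
  -- pigeonhole: find a periodic point of r outside W
  have hpni : ¬ Function.Injective (fun t : Fin (3 * k + 1) => r^[(t : ℕ) + 1] x₀) := by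
    intro hinj
    have := Fintype.card_le_of_injective _ hinj
    rw [ZMod.card, Fintype.card_fin] at this
    omega
  rw [Function.not_injective_iff] at hpni
  obtain ⟨u, v, huv, hne⟩ := hpni
  -- wlog u < v
  have key : ∀ u v : ℕ, u < v → r^[u + 1] x₀ = r^[v + 1] x₀ →
      ∃ y, y ∉ W ∧ ∃ L0, 1 ≤ L0 ∧ r^[L0] y = y := by
    intro u v huv heq
    refine ⟨r^[u + 1] x₀, ?_, v - u, by omega, ?_⟩
    · rw [Function.iterate_succ_apply']
      exact rnotW _
    · rw [← Function.iterate_add_apply, show v - u + (u + 1) = v + 1 by omega]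
      exact heq.symm
  have hyex : ∃ y, y ∉ W ∧ ∃ L0, 1 ≤ L0 ∧ r^[L0] y = y := by
    have hne' : (u : ℕ) ≠ (v : ℕ) := fun h => hne (Fin.ext h)
    rcases lt_or_gt_of_ne hne' with h | h
    · exact key _ _ h huv
    · exact key _ _ h huv.symm
  obtain ⟨y, hyW, L0, hL01, hL0⟩ := hyex
  -- minimal period L
  set P : Set ℕ := {t | 1 ≤ t ∧ r^[t] y = y} with hP
  have hPne : P.Nonempty := ⟨L0, hL01, hL0⟩
  set L : ℕ := sInf P with hLdef
  obtain ⟨hL1, hLy⟩ : 1 ≤ L ∧ r^[L] y = y := Nat.sInf_mem hPne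
  have hLmin : ∀ t, 1 ≤ t → r^[t] y = y → L ≤ t := fun t h1 h2 => Nat.sInf_le ⟨h1, h2⟩
  set a : ℕ → ZMod (3 * k) := fun t => r^[t] y with ha
  have hstep : ∀ t, a (t + 1) = r (a t) := fun t => Function.iterate_succ_apply' r t y
  have haW : ∀ t, a t ∉ W := by
    intro t
    cases t with
    | zero => exact hyW
    | succ t => rw [hstep t]; exact rnotW _
  have hper : ∀ t, a (t + L) = a t := by
    intro t
    show r^[t + L] y = r^[t] y
    rw [Function.iterate_add_apply, hLy]
  have hmodL : ∀ t, a t = a (t % L) := period_mod a L hL1 hper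
  have hinj : ∀ p < L, ∀ q < L, a p = a q → p = q := by
    have hcore : ∀ p q, p < q → q < L → a p ≠ a q := by
      intro p q hpq hqL hpq'
      have h2 : r^[L - q + p] y = y := by
        rw [Function.iterate_add_apply]
        show r^[L - q] (a p) = y
        rw [hpq']
        show r^[L - q] (r^[q] y) = y
        rw [← Function.iterate_add_apply, show L - q + q = L by omega]
        exact hLy
      have := hLmin (L - q + p) (by omega) h2
      omega
    intro p hp q hq hpq
    rcases lt_trichotomy p q with h | h | h
    · exact absurd hpq (hcore p q h hq)
    · exact h
    · exact absurd hpq.symm (hcore q p h hp)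
  set Ssum : ℕ → ℕ := fun t => ∑ j ∈ Finset.range t, omegaW k W (a j) with hSsum
  set S : ℕ := Ssum L with hSdef
  -- divisibility
  have hcast : ∀ t, a t = y + ((t * k + Ssum t : ℕ) : ZMod (3 * k)) := by
    intro t
    induction t with
    | zero =>
      show y = y + ((0 * k + Ssum 0 : ℕ) : ZMod (3 * k))
      simp [hSsum]
    | succ t ih =>
      rw [hstep t, hr]
      simp only
      rw [ih]
      have : Ssum (t + 1) = Ssum t + omegaW k W (a t) := by
        rw [hSsum]
        simp only
        rw [Finset.sum_range_succ]
      rw [this]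
      push_cast
      ring_nf
      rw [show a t = y + ((t * k + Ssum t : ℕ) : ZMod (3 * k)) from ih]
      push_cast
      ring
  have hdvd : 3 * k ∣ L * k + S := by
    have h := hcast L
    rw [show a L = y from hLy] at h
    have h0 : ((L * k + S : ℕ) : ZMod (3 * k)) = 0 := by
      have := h.symm
      rwa [add_eq_left] at this
    exact (ZMod.natCast_eq_zero_iff _ _).mp h0
  -- omega ≥ 1 on the cycle
  have homega1 : ∀ t, 1 ≤ omegaW k W (a t) := by
    intro t
    have hgen : ∀ s, 1 ≤ omegaW k W (a (s + 1)) := by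
      intro s
      rw [hstep s]
      exact omega_pos hk hW (haW s)
    cases t with
    | zero =>
      have h0 : a 0 = a (L - 1 + 1) := by
        rw [show L - 1 + 1 = L by omega, ← hper 0]
        norm_num
      rw [h0]
      exact hgen (L - 1)
    | succ t => exact hgen t
  have hSL : L ≤ S := by
    have := Finset.card_nsmul_le_sum (Finset.range L) (fun j => omegaW k W (a j)) 1
      (fun x _ => homega1 x)
    simpa using this
  -- the disjoint intervals inside W
  set I : ℕ → Finset (ZMod (3 * k)) := fun t =>
    (Finset.range (omegaW k W (a t) + omegaW k W (a (t + 1)))).image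
      (fun s => a (t + 2) - ((1 + s : ℕ) : ZMod (3 * k))) with hI
  have hwle : ∀ t, omegaW k W (a t) ≤ k - 2 := fun t => omega_le hk hW.1 (a t)
  have ha2 : ∀ t, a (t + 2) = a (t + 1) + ((k : ℕ) : ZMod (3 * k))
      + ((omegaW k W (a (t + 1)) : ℕ) : ZMod (3 * k)) := by
    intro t
    rw [show t + 2 = (t + 1) + 1 by omega, hstep (t + 1), hr]
  have hIW : ∀ t, I t ⊆ W := by
    intro t x hx
    obtain ⟨s, hs, rfl⟩ := Finset.mem_image.mp hx
    rw [Finset.mem_range] at hs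
    rcases lt_or_ge s (omegaW k W (a (t + 1))) with hc | hc
    · have hkey : a (t + 2) - ((1 + s : ℕ) : ZMod (3 * k))
          = a (t + 1) + ((k : ℕ) : ZMod (3 * k))
            + (((omegaW k W (a (t + 1)) - (1 + s) : ℕ)) : ZMod (3 * k)) := by
        rw [ha2 t, Nat.cast_sub (by omega)]
        push_cast
        ring
      rw [hkey]
      exact omega_min (by omega)
    · have h1 : a (t + 1) = a t + ((k : ℕ) : ZMod (3 * k))
          + ((omegaW k W (a t) : ℕ) : ZMod (3 * k)) := by rw [hstep t, hr]
      have hAB : a (t + 2) = a t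
          + ((2 * k + omegaW k W (a t) + omegaW k W (a (t + 1)) : ℕ) : ZMod (3 * k)) := by
        rw [ha2 t, h1]
        push_cast
        ring
      have harith : (2 * k + omegaW k W (a t) + omegaW k W (a (t + 1)) : ℕ)
          = (2 * k + (omegaW k W (a t) - (1 + (s - omegaW k W (a (t + 1)))))) + (1 + s) := by
        omega
      have hkey : a (t + 2) - ((1 + s : ℕ) : ZMod (3 * k))
          = a t + ((2 * k : ℕ) : ZMod (3 * k))
            + (((omegaW k W (a t) - (1 + (s - omegaW k W (a (t + 1)))) : ℕ)) : ZMod (3 * k)) := by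
        rw [hAB, harith]
        push_cast
        ring
      rw [hkey]
      exact interval_mem hk hW (haW t) (by omega)
  have hIcard : ∀ t, (I t).card = omegaW k W (a t) + omegaW k W (a (t + 1)) := by
    intro t
    rw [hI]
    simp only
    rw [Finset.card_image_of_injOn, Finset.card_range]
    intro s hs s' hs' hss
    rw [Finset.mem_coe, Finset.mem_range] at hs hs'
    have h1 : ((1 + s : ℕ) : ZMod (3 * k)) = ((1 + s' : ℕ) : ZMod (3 * k)) :=
      sub_right_injective hss
    have h2 := congrArg ZMod.val h1
    rw [ZMod.val_natCast_of_lt (by have := hwle t; have := hwle (t+1); omega),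
        ZMod.val_natCast_of_lt (by have := hwle t; have := hwle (t+1); omega)] at h2
    omega
  -- disjointness via the "distance to next non-W element" function
  have hnu : ∀ t s, s < omegaW k W (a t) + omegaW k W (a (t + 1)) →
      sInf {d : ℕ | (a (t + 2) - ((1 + s : ℕ) : ZMod (3 * k)))
        + ((1 + d : ℕ) : ZMod (3 * k)) ∉ W} = s := by
    intro t s hs
    have hmem : s ∈ {d : ℕ | (a (t + 2) - ((1 + s : ℕ) : ZMod (3 * k)))
        + ((1 + d : ℕ) : ZMod (3 * k)) ∉ W} := by
      show _ ∉ W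
      rw [sub_add_cancel]
      exact haW (t + 2)
    apply le_antisymm (Nat.sInf_le hmem)
    by_contra hlt
    push_neg at hlt
    have hin := Nat.sInf_mem (⟨s, hmem⟩ : Set.Nonempty _)
    set d := sInf {d : ℕ | (a (t + 2) - ((1 + s : ℕ) : ZMod (3 * k)))
        + ((1 + d : ℕ) : ZMod (3 * k)) ∉ W}
    have hd : d < s := hlt
    apply hin
    have he : (a (t + 2) - ((1 + s : ℕ) : ZMod (3 * k))) + ((1 + d : ℕ) : ZMod (3 * k))
        = a (t + 2) - ((1 + (s - d - 1) : ℕ) : ZMod (3 * k)) := by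
      push_cast [Nat.cast_sub (show d ≤ s by omega), Nat.cast_sub (show 1 ≤ s - d by omega)]
      ring
    rw [he]
    apply hIW t
    rw [hI]
    apply Finset.mem_image.mpr
    exact ⟨s - d - 1, Finset.mem_range.mpr (by omega), rfl⟩
  have hdisj : ∀ t ∈ Finset.range L, ∀ t' ∈ Finset.range L, t ≠ t' → Disjoint (I t) (I t') := by
    have hcore : ∀ t t', t < L → t' < L → ¬Disjoint (I t) (I t') → a (t + 2) = a (t' + 2) := by
      intro t t' htL ht'L hnd
      rw [Finset.not_disjoint_iff] at hnd
      obtain ⟨x, hx1, hx2⟩ := hnd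
      obtain ⟨s, hs, hxs⟩ := Finset.mem_image.mp hx1
      obtain ⟨s', hs', hxs'⟩ := Finset.mem_image.mp hx2
      rw [Finset.mem_range] at hs hs'
      have h1 := hnu t s hs
      have h2 := hnu t' s' hs'
      rw [hxs] at h1
      rw [hxs'] at h2
      have hss : s = s' := by rw [← h1, ← h2]
      have : a (t + 2) = x + ((1 + s : ℕ) : ZMod (3 * k)) := by rw [← hxs, sub_add_cancel]
      have h4 : a (t' + 2) = x + ((1 + s' : ℕ) : ZMod (3 * k)) := by
        rw [← hxs', sub_add_cancel]
      rw [this, h4, hss]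
    intro t ht t' ht' hne
    rw [Finset.mem_range] at ht ht'
    by_contra hnd
    have heq := hcore t t' ht ht' hnd
    have := hinj ((t + 2) % L) (Nat.mod_lt _ (by omega)) ((t' + 2) % L) (Nat.mod_lt _ (by omega))
      (by rw [← hmodL (t + 2), ← hmodL (t' + 2)]; exact heq)
    -- (t+2) % L = (t'+2) % L with t,t' < L forces t = t'
    apply hne
    have hmod : (t + 2) % L = (t' + 2) % L := this
    rcases Nat.le_total t t' with hle | hle
    · have hdvd2 : L ∣ (t' + 2) - (t + 2) := (Nat.modEq_iff_dvd' (by omega)).mp hmod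
      rcases Nat.eq_zero_or_pos ((t' + 2) - (t + 2)) with h0 | h0
      · omega
      · have := Nat.le_of_dvd h0 hdvd2; omega
    · have hdvd2 : L ∣ (t + 2) - (t' + 2) := (Nat.modEq_iff_dvd' (by omega)).mp hmod.symm
      rcases Nat.eq_zero_or_pos ((t + 2) - (t' + 2)) with h0 | h0
      · omega
      · have := Nat.le_of_dvd h0 hdvd2; omega
  -- counting: 2 * S + L ≤ 3 * k
  have hUcard : ((Finset.range L).biUnion I).card = 2 * S := by
    rw [Finset.card_biUnion hdisj]
    have h1 : ∀ t ∈ Finset.range L, (I t).card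
        = omegaW k W (a t) + omegaW k W (a (t + 1)) := fun t _ => hIcard t
    rw [Finset.sum_congr rfl h1, Finset.sum_add_distrib]
    have hS' : S = ∑ t ∈ Finset.range L, omegaW k W (a t) := rfl
    have hshift : ∑ t ∈ Finset.range L, omegaW k W (a (t + 1))
        = ∑ t ∈ Finset.range L, omegaW k W (a t) := by
      have e1 := Finset.sum_range_succ' (fun j => omegaW k W (a j)) L
      have e2 := Finset.sum_range_succ (fun j => omegaW k W (a j)) L
      have e3 : omegaW k W (a L) = omegaW k W (a 0) := by
        rw [show a L = a 0 from by simpa using hper 0]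
      omega
    rw [hshift, hS']
    ring
  have hUW : (Finset.range L).biUnion I ⊆ W := Finset.biUnion_subset.mpr fun t _ => hIW t
  have hCcard : ((Finset.range L).image a).card = L := by
    rw [Finset.card_image_of_injOn, Finset.card_range]
    intro p hp q hq hpq
    rw [Finset.mem_coe, Finset.mem_range] at hp hq
    exact hinj p hp q hq hpq
  have hdisjUC : Disjoint ((Finset.range L).biUnion I) ((Finset.range L).image a) := by
    rw [Finset.disjoint_left]
    intro x hx hx'
    obtain ⟨t, -, rfl⟩ := Finset.mem_image.mp hx'
    exact haW t (hUW hx)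
  have hcount : 2 * S + L ≤ 3 * k := by
    have h1 : (((Finset.range L).biUnion I) ∪ ((Finset.range L).image a)).card
        ≤ Fintype.card (ZMod (3 * k)) := Finset.card_le_univ _
    rw [Finset.card_union_of_disjoint hdisjUC, hUcard, hCcard, ZMod.card] at h1
    exact h1
  -- arithmetic: S = k, L % 3 = 2
  obtain ⟨m, hm⟩ := hdvd
  have hm1 : 1 ≤ m := by
    rcases Nat.eq_zero_or_pos m with h0 | h0
    · rw [h0, Nat.mul_zero] at hm; omega
    · exact h0
  have hLm : L < 3 * m := by
    have h1 : k * L < k * (3 * m) := by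
      have : L * k < 3 * k * m := by omega
      calc k * L = L * k := Nat.mul_comm _ _
      _ < 3 * k * m := this
      _ = k * (3 * m) := by ring
    exact lt_of_mul_lt_mul_left h1 (Nat.zero_le k)
  have hSc : S = k * (3 * m - L) := by
    have h1 : k * (3 * m - L) + k * L = k * (3 * m) := by
      rw [← Nat.mul_add]
      congr 1
      omega
    have h2 : k * (3 * m) = L * k + S := by rw [hm]; ring
    have h3 : k * L = L * k := Nat.mul_comm _ _
    omega
  have hc1 : 3 * m - L = 1 := by
    by_contra hcc
    have h2 : 2 ≤ 3 * m - L := by omega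
    have h3 : k * 2 ≤ k * (3 * m - L) := Nat.mul_le_mul_left k h2
    omega
  have hSk : S = k := by rw [hSc, hc1, Nat.mul_one]
  -- compute pW
  have hra : ∀ t, rseqW k W y t = a t := by
    intro t
    induction t with
    | zero => rfl
    | succ t ih =>
      show rseqW k W y t + _ + _ = a (t + 1)
      rw [ih, hstep t, hr]
  have hsum_eq : ∀ t, ∑ j ∈ Finset.range t, omegaW k W (rseqW k W y j) = Ssum t := by
    intro t
    rw [hSsum]
    exact Finset.sum_congr rfl fun j _ => by rw [hra j]
  have hTset : {t : ℕ | ∑ j ∈ Finset.range t, omegaW k W (rseqW k W y j) ≤ k - 1}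
      = {t : ℕ | t < L} := by
    ext t
    simp only [Set.mem_setOf_eq, hsum_eq t]
    constructor
    · intro h
      by_contra hge
      push_neg at hge
      have hmono : Ssum L ≤ Ssum t := by
        rw [hSsum]
        exact Finset.sum_le_sum_of_subset (Finset.range_subset_range.mpr hge)
      omega
    · intro h
      have hmono : Ssum t ≤ Ssum (L - 1) := by
        rw [hSsum]
        exact Finset.sum_le_sum_of_subset (Finset.range_subset_range.mpr (by omega))
      have hlast : Ssum (L - 1) + omegaW k W (a (L - 1)) = Ssum L := by
        rw [hSsum]
        simp only
        rw [show L = (L - 1) + 1 by omega, Finset.sum_range_succ]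
        simp [show L - 1 + 1 - 1 = L - 1 by omega]
      have := homega1 (L - 1)
      omega
  have hp : pW k W y = L - 1 := by
    unfold pW
    rw [hTset]
    apply le_antisymm
    · exact csSup_le ⟨0, by simp only [Set.mem_setOf_eq]; omega⟩
        (fun t ht => by simp only [Set.mem_setOf_eq] at ht; omega)
    · exact le_csSup ⟨L, fun t ht => le_of_lt ht⟩ (by simp only [Set.mem_setOf_eq]; omega)
  exact ⟨y, hyW, by rw [hp]; omega⟩
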